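/- Define, for θ0 ∈ [0, π), T(θ0) = ∫_{θ0}^{π} √((1 − cos θ)/(cos θ0 − cos θ)) dθ. Then for all θ0, θ1 ∈ [0, π) one has T(θ0) = T(θ1). -/

import Mathlib

open Real intervalIntegral

noncomputable def T (θ0 : ℝ) : ℝ :=
  ∫ θ in θ0..Real.pi,
    Real.sqrt ((1 - Real.cos θ) / (Real.cos θ0 - Real.cos θ))

open Set MeasureTheory in
lemma T_eq_pi (θ0 : ℝ) (h00 : 0 ≤ θ0) (h01 : θ0 < Real.pi) : T θ0 = Real.pi := by
  set c : ℝ := Real.cos (θ0 / 2) with hc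
  have hpi := Real.pi_pos
  have hcpos : 0 < c := Real.cos_pos_of_mem_Ioo ⟨by linarith, by linarith⟩
  have hcne : c ≠ 0 := ne_of_gt hcpos
  set F : ℝ → ℝ := fun θ => -2 * Real.arcsin (Real.cos (θ / 2) / c) with hF
  set g' : ℝ → ℝ := fun θ =>
      Real.sin (θ / 2) / Real.sqrt (c ^ 2 - Real.cos (θ / 2) ^ 2) with hg'
  -- basic facts for θ in the open interval
  have key : ∀ θ ∈ Ioo θ0 Real.pi,
      0 < Real.sin (θ / 2) ∧ 0 < Real.cos (θ / 2) ∧ Real.cos (θ / 2) < c := by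
    intro θ ⟨h1, h2⟩
    refine ⟨Real.sin_pos_of_pos_of_lt_pi (by linarith) (by linarith), ?_, ?_⟩
    · exact Real.cos_pos_of_mem_Ioo ⟨by linarith, by linarith⟩
    · exact Real.cos_lt_cos_of_nonneg_of_le_pi (by linarith) (by linarith) (by linarith)
  -- the derivative of F on the open interval
  have hderiv : ∀ θ ∈ Ioo θ0 Real.pi, HasDerivAt F (g' θ) θ := by
    intro θ hθ
    obtain ⟨hs, hc1, hc2⟩ := key θ hθ
    have hu1 : Real.cos (θ / 2) / c ≠ -1 := by
      have : 0 < Real.cos (θ / 2) / c := div_pos hc1 hcpos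
      linarith
    have hu2 : Real.cos (θ / 2) / c ≠ 1 := by
      have : Real.cos (θ / 2) / c < 1 := (div_lt_one hcpos).2 hc2
      linarith
    have harc := Real.hasDerivAt_arcsin hu1 hu2
    have hinner : HasDerivAt (fun θ : ℝ => Real.cos (θ / 2) / c)
        (-Real.sin (θ / 2) * (1 / 2) / c) θ := by
      have h1 : HasDerivAt (fun θ : ℝ => θ / 2) (1 / 2) θ := by
        simpa using (hasDerivAt_id θ).div_const 2
      exact ((Real.hasDerivAt_cos (θ / 2)).comp θ h1).div_const c
    have := (harc.comp θ hinner).const_mul (-2 : ℝ)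
    refine this.congr_deriv ?_
    have hsq : 0 < c ^ 2 - Real.cos (θ / 2) ^ 2 := by nlinarith
    have h1 : Real.sqrt (1 - (Real.cos (θ / 2) / c) ^ 2)
        = Real.sqrt (c ^ 2 - Real.cos (θ / 2) ^ 2) / c := by
      rw [show 1 - (Real.cos (θ / 2) / c) ^ 2
          = (c ^ 2 - Real.cos (θ / 2) ^ 2) / c ^ 2 by field_simp,
        Real.sqrt_div hsq.le, Real.sqrt_sq hcpos.le]
    rw [hg']
    simp only [h1]
    have hsqrt : Real.sqrt (c ^ 2 - Real.cos (θ / 2) ^ 2) ≠ 0 := by positivity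
    field_simp
  -- nonnegativity of g'
  have hg'nonneg : ∀ θ ∈ Ioo θ0 Real.pi, 0 ≤ g' θ := by
    intro θ hθ
    obtain ⟨hs, _, _⟩ := key θ hθ
    exact div_nonneg hs.le (Real.sqrt_nonneg _)
  -- the integrand agrees with g' on Ioc
  have hinteq : ∀ θ ∈ Ioc θ0 Real.pi,
      Real.sqrt ((1 - Real.cos θ) / (Real.cos θ0 - Real.cos θ)) = g' θ := by
    intro θ ⟨h1, h2⟩
    have hcosθ : Real.cos θ = 2 * Real.cos (θ / 2) ^ 2 - 1 := by
      rw [show θ = 2 * (θ / 2) by ring, Real.cos_two_mul]; ring_nf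
    have hcosθ0 : Real.cos θ0 = 2 * c ^ 2 - 1 := by
      rw [hc, show θ0 = 2 * (θ0 / 2) by ring, Real.cos_two_mul]; ring_nf
    have hsin : 0 ≤ Real.sin (θ / 2) :=
      Real.sin_nonneg_of_nonneg_of_le_pi (by linarith) (by linarith)
    have hlt : Real.cos (θ / 2) < c := by
      rcases eq_or_lt_of_le h2 with rfl | h2'
      · simpa using hcpos
      · exact Real.cos_lt_cos_of_nonneg_of_le_pi (by linarith) (by linarith) (by linarith)
    have hcos2 : 0 ≤ Real.cos (θ / 2) := Real.cos_nonneg_of_mem_Icc ⟨by linarith, by linarith⟩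
    have hpos : 0 < c ^ 2 - Real.cos (θ / 2) ^ 2 := by nlinarith
    have hnum : 1 - Real.cos θ = 2 * Real.sin (θ / 2) ^ 2 := by
      have := Real.sin_sq_add_cos_sq (θ / 2)
      rw [hcosθ]; linarith
    have hden : Real.cos θ0 - Real.cos θ = 2 * (c ^ 2 - Real.cos (θ / 2) ^ 2) := by
      rw [hcosθ, hcosθ0]; ring
    rw [hnum, hden, hg',
      show (2 : ℝ) * Real.sin (θ / 2) ^ 2 / (2 * (c ^ 2 - Real.cos (θ / 2) ^ 2))
        = Real.sin (θ / 2) ^ 2 / (c ^ 2 - Real.cos (θ / 2) ^ 2) by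
        rw [mul_div_mul_left _ _ (two_ne_zero)],
      Real.sqrt_div (sq_nonneg _), Real.sqrt_sq hsin]
  -- continuity of F
  have hFcont : Continuous F :=
    continuous_const.mul (Real.continuous_arcsin.comp
      ((Real.continuous_cos.comp (continuous_id.div_const 2)).div_const c))
  -- integrability of the integrand
  have hint : IntervalIntegrable
      (fun θ => Real.sqrt ((1 - Real.cos θ) / (Real.cos θ0 - Real.cos θ)))
      volume θ0 Real.pi := by
    rw [intervalIntegrable_iff_integrableOn_Ioc_of_le h01.le]
    exact (integrableOn_deriv_of_nonneg hFcont.continuousOn hderiv hg'nonneg).congr_fun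
      (fun θ hθ => (hinteq θ hθ).symm) measurableSet_Ioc
  -- FTC
  have hFTC := intervalIntegral.integral_eq_sub_of_hasDeriv_right_of_le h01.le
    hFcont.continuousOn
    (fun x hx => by
      rw [hinteq x (Ioo_subset_Ioc_self hx)]
      exact (hderiv x hx).hasDerivWithinAt) hint
  rw [T, hFTC, hF]
  simp only [Real.cos_pi_div_two, zero_div, Real.arcsin_zero, mul_zero,
    ← hc, div_self hcne, Real.arcsin_one]
  ring

theorem tautochrone_constant (θ0 θ1 : ℝ)
    (h00 : 0 ≤ θ0) (h01 : θ0 < Real.pi)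
    (h10 : 0 ≤ θ1) (h11 : θ1 < Real.pi) :
    T θ0 = T θ1 := by
  rw [T_eq_pi θ0 h00 h01, T_eq_pi θ1 h10 h11]
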